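/- arXiv:1203.1203 — 2 statements merged into one kernel-verified Lean document; each statement's English description precedes it below -/
import Mathlib

section
/- Every balanced word over {a,b} is trapezoidal. -/
open List

/-- Words over the two-letter alphabet {a,b}, encoded as lists of booleans
(`false` = a, `true` = b). -/
abbrev Word := List Bool

/-- The set of factors of `w` of length `n`. -/
def factorSet (w : Word) (n : ℕ) : Set Word :=
  {u | u.length = n ∧ u <:+: w}

/-- `w` is trapezoidal if it has at most `n+1` distinct factors of length `n`, for all `n`. -/
def Trapezoidal (w : Word) : Prop :=
  ∀ n : ℕ, (factorSet w n).ncard ≤ n + 1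

/-- `u` is a right special factor of `w`. -/
def RightSpecial (w u : Word) : Prop :=
  (u ++ [false]) <:+: w ∧ (u ++ [true]) <:+: w

/-- `u` is a left special factor of `w`. -/
def LeftSpecial (w u : Word) : Prop :=
  (false :: u) <:+: w ∧ (true :: u) <:+: w

/-- The number of occurrences of `u` as a factor of `w` (counted by starting position). -/
noncomputable def occ (u w : Word) : ℕ :=
  {i : ℕ | i + u.length ≤ w.length ∧ (w.drop i).take u.length = u}.ncard

/-- `H_w`: the minimal length of a prefix of `w` occurring exactly once in `w`. -/
noncomputable def Hp (w : Word) : ℕ := sInf {n | n ≤ w.length ∧ occ (w.take n) w = 1}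

/-- `K_w`: the minimal length of a suffix of `w` occurring exactly once in `w`. -/
noncomputable def Kp (w : Word) : ℕ := sInf {n | n ≤ w.length ∧ occ (w.drop (w.length - n)) w = 1}

/-- `R_w`: the minimal `n` such that `w` has no right special factor of length `n`. -/
noncomputable def Rp (w : Word) : ℕ := sInf {n | ∀ u : Word, u.length = n → ¬ RightSpecial w u}

/-- `L_w`: the minimal `n` such that `w` has no left special factor of length `n`. -/
noncomputable def Lp (w : Word) : ℕ := sInf {n | ∀ u : Word, u.length = n → ¬ LeftSpecial w u}

/-- A word is closed if it is empty or has a factor, different from the word itself,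
occurring exactly twice, as a prefix and as a suffix. -/
def ClosedWord (w : Word) : Prop :=
  w = [] ∨ ∃ u : Word, u ≠ w ∧ u <+: w ∧ u <:+ w ∧ occ u w = 2

/-- A binary word is balanced if any two factors of the same length have the same number
of occurrences of each letter, up to one. -/
def BalancedWord (w : Word) : Prop :=
  ∀ u v : Word, u <:+: w → v <:+: w → u.length = v.length →
    ∀ c : Bool, ((u.count c : ℤ) - (v.count c : ℤ)).natAbs ≤ 1

/-- `(f,g)` is a pathological pair of `w`. -/
def PathPair (w f g : Word) : Prop :=
  f <:+: w ∧ g <:+: w ∧ f.length = g.length ∧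
    2 ≤ ((f.count false : ℤ) - (g.count false : ℤ)).natAbs

/-- `p` is a period of `u`: `1 ≤ p ≤ |u|` and `u_i = u_{i+p}` whenever both sides are defined. -/
def HasPeriod (u : Word) (p : ℕ) : Prop :=
  1 ≤ p ∧ p ≤ u.length ∧ ∀ i : ℕ, i + p < u.length → u[i]? = u[i + p]?

/-- A word is central if it is empty or has two coprime periods `p`, `q`
with length `p + q - 2`. -/
def Central (u : Word) : Prop :=
  u = [] ∨ ∃ p q : ℕ, Nat.Coprime p q ∧ _root_.HasPeriod u p ∧ _root_.HasPeriod u q ∧ u.length + 2 = p + q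


lemma factorSet_finite (w : Word) (n : ℕ) : (factorSet w n).Finite := by
  apply Set.Finite.subset (List.finite_toSet w.sublists)
  intro u hu
  simpa using hu.2.sublist

lemma mem_factorSet_length {w u : Word} {n : ℕ} (h : u ∈ factorSet w n) : u.length = n := h.1

lemma rs_tail {w : Word} {a : Bool} {u : Word} (h : RightSpecial w (a :: u)) :
    RightSpecial w u := by
  constructor
  · exact ((List.suffix_cons a (u ++ [false])).isInfix).trans h.1
  · exact ((List.suffix_cons a (u ++ [true])).isInfix).trans h.2

lemma rs_unique {w : Word} (hw : BalancedWord w) :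
    ∀ n : ℕ, ∀ u v : Word, u.length = n → v.length = n →
      RightSpecial w u → RightSpecial w v → u = v := by
  intro n
  induction n with
  | zero =>
    intro u v hu hv _ _
    rw [List.length_eq_zero_iff] at hu hv; rw [hu, hv]
  | succ n ih =>
    intro u v hu hv hru hrv
    match u, v with
    | a :: u', b :: v' =>
      simp only [List.length_cons, Nat.succ.injEq] at hu hv
      have huv' : u' = v' := ih u' v' hu hv (rs_tail hru) (rs_tail hrv)
      subst huv'
      by_cases hab : a = b
      · rw [hab]
      · -- a ≠ b: both (false :: u') ++ [false] and (true :: u') ++ [true] are factors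
        exfalso
        have hf : ((false :: u') ++ [false]) <:+: w := by
          cases a
          · exact hru.1
          · cases b
            · exact hrv.1
            · exact absurd rfl hab
        have hg : ((true :: u') ++ [true]) <:+: w := by
          cases a
          · cases b
            · exact absurd rfl hab
            · exact hrv.2
          · exact hru.2
        have hlen : ((false :: u') ++ [false]).length = ((true :: u') ++ [true]).length := by
          simp
        have := hw _ _ hf hg hlen false
        simp [List.count_append, List.count_cons] at this
        omega

lemma collision {w u v : Word} (hu : u <:+: w) (hv : v <:+: w)
    (hun : u ≠ []) (hvn : v ≠ []) (hd : u.dropLast = v.dropLast) (hne : u ≠ v) :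
    RightSpecial w u.dropLast := by
  have hu' : u.dropLast ++ [u.getLast hun] = u := List.dropLast_append_getLast hun
  have hv' : v.dropLast ++ [v.getLast hvn] = v := List.dropLast_append_getLast hvn
  have hcd : u.getLast hun ≠ v.getLast hvn := by
    intro h
    apply hne
    rw [← hu', ← hv', hd, h]
  cases hc : u.getLast hun <;> cases hd' : v.getLast hvn
  · exact absurd (hc.trans hd'.symm) hcd
  · constructor
    · rw [hc] at hu'; rw [hu']; exact hu
    · rw [hd'] at hv'; rw [hd, hv']; exact hv
  · constructor
    · rw [hd'] at hv'; rw [hd, hv']; exact hv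
    · rw [hc] at hu'; rw [hu']; exact hu
  · exact absurd (hc.trans hd'.symm) hcd

lemma dropLast_mem_factorSet {w u : Word} {n : ℕ} (h : u ∈ factorSet w (n + 1)) :
    u.dropLast ∈ factorSet w n := by
  have hun : u ≠ [] := by
    intro heq; rw [heq] at h; exact absurd h.1 (by simp)
  constructor
  · rw [List.length_dropLast, h.1]; omega
  · have : u.dropLast <+: u := ⟨[u.getLast hun], List.dropLast_append_getLast hun⟩
    exact this.isInfix.trans h.2

lemma factorSet_succ_le {w : Word} (hw : BalancedWord w) (n : ℕ) :
    (factorSet w (n + 1)).ncard ≤ (factorSet w n).ncard + 1 := by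
  by_cases hr : ∃ r : Word, r.length = n ∧ RightSpecial w r
  · obtain ⟨r, hrl, hrs⟩ := hr
    have hrnotmem : r ++ [true] ∉ factorSet w n := by
      intro h
      have := h.1
      simp [hrl] at this
    have key : (factorSet w (n+1)).ncard ≤ (insert (r ++ [true]) (factorSet w n)).ncard := by
      refine Set.ncard_le_ncard_of_injOn
        (fun u => if u = r ++ [true] then r ++ [true] else u.dropLast) ?_ ?_ ?_
      · intro u hu
        by_cases h : u = r ++ [true]
        · simp [h]
        · simp only [h, if_false]
          exact Set.mem_insert_of_mem _ (dropLast_mem_factorSet hu)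
      · intro u hu v hv heq
        have hulen := mem_factorSet_length hu
        have hvlen := mem_factorSet_length hv
        have hun : u ≠ [] := by intro h; rw [h] at hulen; exact Nat.succ_ne_zero n hulen.symm
        have hvn : v ≠ [] := by intro h; rw [h] at hvlen; exact Nat.succ_ne_zero n hvlen.symm
        by_cases h1 : u = r ++ [true] <;> by_cases h2 : v = r ++ [true]
        · rw [h1, h2]
        · exfalso
          simp only [h1, h2, if_true, if_false] at heq
          have : (v.dropLast).length = n := by rw [List.length_dropLast, hvlen]; omega
          rw [← heq] at this
          simp [hrl] at this
        · exfalso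
          simp only [h1, h2, if_true, if_false] at heq
          have : (u.dropLast).length = n := by rw [List.length_dropLast, hulen]; omega
          rw [heq] at this
          simp [hrl] at this
        · simp only [h1, h2, if_false] at heq
          by_contra hne
          have hrs' := collision hu.2 hv.2 hun hvn heq hne
          have hdl : (u.dropLast).length = n := by rw [List.length_dropLast, hulen]; omega
          have := rs_unique hw n u.dropLast r hdl hrl hrs' hrs
          -- u.dropLast = r, so u = r ++ [c]; u ≠ r ++ [true] so u = r ++ [false]
          -- similarly v.dropLast = r, v ≠ r ++ [true] so v = r ++ [false], contradiction
          have hu' := List.dropLast_append_getLast hun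
          have hv' := List.dropLast_append_getLast hvn
          have hcu : u.getLast hun = false := by
            cases hc : u.getLast hun
            · rfl
            · exfalso; apply h1; rw [← hu', this, hc]
          have hcv : v.getLast hvn = false := by
            cases hc : v.getLast hvn
            · rfl
            · exfalso; apply h2; rw [← hv', ← heq, this, hc]
          apply hne
          rw [← hu', ← hv', heq, hcu, hcv]
      · exact Set.Finite.insert _ (factorSet_finite w n)
    calc (factorSet w (n+1)).ncard ≤ (insert (r ++ [true]) (factorSet w n)).ncard := key
      _ = (factorSet w n).ncard + 1 :=
        Set.ncard_insert_of_notMem hrnotmem (factorSet_finite w n)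
  · push_neg at hr
    have key : (factorSet w (n+1)).ncard ≤ (factorSet w n).ncard := by
      refine Set.ncard_le_ncard_of_injOn (fun u => u.dropLast) ?_ ?_ ?_
      · intro u hu; exact dropLast_mem_factorSet hu
      · intro u hu v hv heq
        have hulen := mem_factorSet_length hu
        have hvlen := mem_factorSet_length hv
        have hun : u ≠ [] := by intro h; rw [h] at hulen; exact Nat.succ_ne_zero n hulen.symm
        have hvn : v ≠ [] := by intro h; rw [h] at hvlen; exact Nat.succ_ne_zero n hvlen.symm
        by_contra hne
        have hrs' := collision hu.2 hv.2 hun hvn heq hne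
        have hdl : (u.dropLast).length = n := by rw [List.length_dropLast, hulen]; omega
        exact hr u.dropLast hdl hrs'
      · exact factorSet_finite w n
    omega

/-- Every balanced (finite Sturmian) word is trapezoidal. -/
theorem balanced_trapezoidal (w : Word) (hw : BalancedWord w) : Trapezoidal w := by
  intro n
  induction n with
  | zero =>
    have : factorSet w 0 = {[]} := by
      ext u
      simp only [factorSet, Set.mem_setOf_eq, Set.mem_singleton_iff, List.length_eq_zero_iff]
      constructor
      · rintro ⟨h, _⟩; exact h
      · rintro rfl; exact ⟨rfl, List.nil_infix⟩
    rw [this, Set.ncard_singleton]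
  | succ n ih =>
    calc (factorSet w (n+1)).ncard ≤ (factorSet w n).ncard + 1 := factorSet_succ_le hw n
      _ ≤ (n + 1) + 1 := by omega
end

section
/- Let w be a nonempty trapezoidal word over {a,b}. The following conditions are equivalent: (1) w is open; (2) the prefix of w of length H_w − 1 (the longest repeated prefix of w) is a right special factor of w and H_w = R_w (so it is the longest right special factor of w); (3) the suffix of w of length K_w − 1 (the longest repeated suffix of w) is a left special factor of w and K_w = L_w (so it is the longest left special factor of w). -/
open List

-- ===== auxiliary development =====

/-- occurrence positions as a Finset -/
def occF (u w : Word) : Finset ℕ :=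
  (Finset.range (w.length + 1)).filter
    (fun i => i + u.length ≤ w.length ∧ (w.drop i).take u.length = u)

lemma mem_occF {u w : Word} {i : ℕ} :
    i ∈ occF u w ↔ i + u.length ≤ w.length ∧ (w.drop i).take u.length = u := by
  simp only [occF, Finset.mem_filter, Finset.mem_range]
  constructor
  · rintro ⟨-, h⟩; exact h
  · rintro ⟨h1, h2⟩; exact ⟨by omega, h1, h2⟩

lemma occ_eq_card (u w : Word) : occ u w = (occF u w).card := by
  rw [occ, ← Set.ncard_coe_finset]
  congr 1
  ext i
  simp only [Set.mem_setOf_eq, Finset.coe_filter, occF, Finset.mem_range, Set.mem_setOf_eq]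
  constructor
  · rintro ⟨h1, h2⟩; exact ⟨by omega, h1, h2⟩
  · rintro ⟨-, h⟩; exact h

lemma mem_occF_iff_decomp {u w : Word} {i : ℕ} :
    i ∈ occF u w ↔ ∃ s t : Word, s.length = i ∧ s ++ u ++ t = w := by
  rw [mem_occF]
  constructor
  · rintro ⟨h1, h2⟩
    refine ⟨w.take i, w.drop (i + u.length), w.length_take_of_le (by omega), ?_⟩
    have hd : w.drop i = u ++ w.drop (i + u.length) := by
      conv_lhs => rw [← List.take_append_drop u.length (w.drop i)]
      rw [h2, List.drop_drop]
    rw [List.append_assoc, ← hd, List.take_append_drop]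
  · rintro ⟨s, t, hs, hw⟩
    have hlen : w.length = i + u.length + t.length := by
      rw [← hw]; simp [hs]; ring
    refine ⟨by omega, ?_⟩
    rw [← hw, List.append_assoc, ← hs, List.drop_left, List.take_left]

lemma infix_iff_occF {u w : Word} : u <:+: w ↔ (occF u w).Nonempty := by
  constructor
  · rintro ⟨s, t, h⟩
    exact ⟨s.length, mem_occF_iff_decomp.2 ⟨s, t, rfl, h⟩⟩
  · rintro ⟨i, hi⟩
    obtain ⟨s, t, -, h⟩ := mem_occF_iff_decomp.1 hi
    exact ⟨s, t, h⟩

/-- shift an occurrence of `x :: l` to an occurrence of `l` -/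
lemma occF_shift {x : Bool} {l w : Word} {i : ℕ} (h : i ∈ occF (x :: l) w) :
    (i + 1) ∈ occF l w := by
  obtain ⟨s, t, hs, hw⟩ := mem_occF_iff_decomp.1 h
  refine mem_occF_iff_decomp.2 ⟨s ++ [x], t, by simp [hs], ?_⟩
  rw [← hw]; simp

lemma take_getElem_eq {w : Word} {i m : ℕ} (h : i + m < w.length) :
    (w.drop i).take (m + 1) = (w.drop i).take m ++ [w[i + m]] := by
  rw [List.take_succ]
  congr 1
  rw [List.getElem?_drop]
  have : i + m < w.length := h
  rw [List.getElem?_eq_getElem this]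
  rfl

lemma occF_card_reverse (u w : Word) :
    (occF u w).card = (occF u.reverse w.reverse).card := by
  have key : ∀ (u w : Word) (i : ℕ), i ∈ occF u w →
      (w.length - u.length - i) ∈ occF u.reverse w.reverse := by
    intro u w i hi
    obtain ⟨s, t, hs, hw⟩ := mem_occF_iff_decomp.1 hi
    refine mem_occF_iff_decomp.2 ⟨t.reverse, s.reverse, ?_, ?_⟩
    · have : w.length = s.length + u.length + t.length := by rw [← hw]; simp; ring
      simp; omega
    · rw [← hw]; simp
  refine Finset.card_bij' (fun i _ => w.length - u.length - i)
    (fun j _ => w.length - u.length - j) ?_ ?_ ?_ ?_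
  · intro i hi; exact key u w i hi
  · intro j hj
    have := key u.reverse w.reverse j hj
    simpa using this
  · intro i hi
    have h1 := (mem_occF.1 hi).1
    show w.length - u.length - (w.length - u.length - i) = i
    omega
  · intro j hj
    have h1 := (mem_occF.1 hj).1
    simp at h1
    show w.length - u.length - (w.length - u.length - j) = j
    omega

lemma occ_reverse (u w : Word) : occ u w = occ u.reverse w.reverse := by
  rw [occ_eq_card, occ_eq_card, occF_card_reverse]

lemma drop_sub_eq_reverse_take {w : Word} {m : ℕ} :
    w.drop (w.length - m) = (w.reverse.take m).reverse := by
  rw [List.reverse_take]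
  simp

/-- occurrences of longer prefixes are occurrences of shorter ones -/
lemma occF_take_subset {w : Word} {m n : ℕ} (hmn : m ≤ n) (hn : n ≤ w.length) :
    occF (w.take n) w ⊆ occF (w.take m) w := by
  intro i hi
  rw [mem_occF] at hi ⊢
  obtain ⟨h1, h2⟩ := hi
  rw [w.length_take_of_le hn] at h1
  have hm : m ≤ w.length := le_trans hmn hn
  rw [w.length_take_of_le hm]
  refine ⟨by omega, ?_⟩
  have : ((w.drop i).take n).take m = (w.take n).take m := by
    rw [w.length_take_of_le hn] at h2
    rw [h2]
  rw [List.take_take, List.take_take] at this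
  rw [min_eq_left hmn] at this
  exact this

/-- occurrences of longer suffixes yield occurrences of shorter ones (shifted) -/
lemma occF_suffix_card_mono {w : Word} {m n : ℕ} (hmn : m ≤ n) (hn : n ≤ w.length) :
    (occF (w.drop (w.length - n)) w).card ≤ (occF (w.drop (w.length - m)) w).card := by
  have hlenn : (w.drop (w.length - n)).length = n := by
    rw [List.length_drop]; omega
  have hlenm : (w.drop (w.length - m)).length = m := by
    rw [List.length_drop]; omega
  refine Finset.card_le_card_of_injOn (fun i => i + (n - m)) ?_ ?_
  · intro i hi
    show i + (n - m) ∈ occF (w.drop (w.length - m)) w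
    rw [Finset.mem_coe, mem_occF, hlenn] at hi
    obtain ⟨h1, h2⟩ := hi
    rw [mem_occF, hlenm]
    have h3 := congrArg (fun l => List.drop (n - m) l) h2
    simp only [List.drop_take, List.drop_drop] at h3
    have e1 : n - (n - m) = m := by omega
    have e3 : w.length - n + (n - m) = w.length - m := by omega
    rw [e1, e3] at h3
    exact ⟨by omega, h3⟩
  · intro i _ j _ h
    simp only at h
    omega

/-- factors of length n, as a Finset -/
def FactF (w : Word) (n : ℕ) : Finset Word :=
  ((Finset.range (w.length + 1)).image (fun i => (w.drop i).take n)).filter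
    (fun u => u.length = n)

lemma mem_FactF {w u : Word} {n : ℕ} :
    u ∈ FactF w n ↔ u.length = n ∧ u <:+: w := by
  simp only [FactF, Finset.mem_filter, Finset.mem_image, Finset.mem_range]
  constructor
  · rintro ⟨⟨i, -, rfl⟩, h2⟩
    exact ⟨h2, ((List.take_prefix _ _).isInfix).trans (List.drop_suffix i w).isInfix⟩
  · rintro ⟨h1, h2⟩
    obtain ⟨i, hi⟩ := infix_iff_occF.1 h2
    rw [mem_occF] at hi
    refine ⟨⟨i, by omega, ?_⟩, h1⟩
    rw [← h1, hi.2]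

lemma factorSet_eq_FactF (w : Word) (n : ℕ) : factorSet w n = ↑(FactF w n) := by
  ext u
  simp [factorSet, mem_FactF]

lemma ncard_factorSet (w : Word) (n : ℕ) : (factorSet w n).ncard = (FactF w n).card := by
  rw [factorSet_eq_FactF, Set.ncard_coe_finset]

lemma FactF_zero (w : Word) : FactF w 0 = {([] : Word)} := by
  ext u
  simp only [mem_FactF, List.length_eq_zero_iff, Finset.mem_singleton]
  constructor
  · rintro ⟨rfl, -⟩; rfl
  · rintro rfl; exact ⟨rfl, List.nil_infix⟩

/-- prefix of an infix is an infix -/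
lemma take_infix_of_infix {u w : Word} (m : ℕ) (h : u <:+: w) : u.take m <:+: w :=
  ((List.take_prefix m u).isInfix).trans h

lemma drop_infix_of_infix {u w : Word} (m : ℕ) (h : u <:+: w) : u.drop m <:+: w :=
  ((List.drop_suffix m u).isInfix).trans h

lemma RightSpecial.infix {w u : Word} (h : RightSpecial w u) : u <:+: w := by
  obtain ⟨s, t, hw⟩ := h.1
  exact ⟨s, [false] ++ t, by rw [← hw]; simp⟩

lemma RightSpecial.suffix {w u v : Word} (h : RightSpecial w u) (hv : v <:+ u) :
    RightSpecial w v := by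
  obtain ⟨x, hx⟩ := hv
  constructor
  · refine (List.IsInfix.trans ?_ h.1)
    exact ⟨x, [], by rw [← hx]; simp⟩
  · refine (List.IsInfix.trans ?_ h.2)
    exact ⟨x, [], by rw [← hx]; simp⟩

/-- counting: if every factor of length n extends to the right, then
    #F(n+1) ≥ #F(n) + #(right special factors in S) -/
lemma ext_count {w : Word} {n : ℕ}
    (hext : ∀ u ∈ FactF w n, ∃ c, u ++ [c] ∈ FactF w (n + 1))
    (S : Finset Word) (hS : ∀ u ∈ S, u ∈ FactF w n ∧ RightSpecial w u) :
    (FactF w n).card + S.card ≤ (FactF w (n + 1)).card := by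
  classical
  have hmap : ∀ x ∈ FactF w (n + 1), x.take n ∈ FactF w n := by
    intro x hx
    rw [mem_FactF] at hx ⊢
    refine ⟨?_, take_infix_of_infix n hx.2⟩
    rw [List.length_take, hx.1]
    omega
  rw [Finset.card_eq_sum_card_fiberwise hmap]
  have hSsub : S ⊆ FactF w n := fun u hu => (hS u hu).1
  have fib1 : ∀ u ∈ FactF w n,
      1 ≤ (Finset.filter (fun x => x.take n = u) (FactF w (n + 1))).card := by
    intro u hu
    obtain ⟨c, hc⟩ := hext u hu
    refine Finset.card_pos.2 ⟨u ++ [c], Finset.mem_filter.2 ⟨hc, ?_⟩⟩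
    have : u.length = n := (mem_FactF.1 hu).1
    rw [← this, List.take_left]
  have fib2 : ∀ u ∈ S,
      2 ≤ (Finset.filter (fun x => x.take n = u) (FactF w (n + 1))).card := by
    intro u hu
    obtain ⟨hu1, hu2⟩ := hS u hu
    have hul : u.length = n := (mem_FactF.1 hu1).1
    have hmemf : ∀ c : Bool, u ++ [c] ∈
        Finset.filter (fun x => x.take n = u) (FactF w (n + 1)) := by
      intro c
      refine Finset.mem_filter.2 ⟨mem_FactF.2 ⟨by simp [hul], ?_⟩, by rw [← hul, List.take_left]⟩
      cases c
      · exact hu2.1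
      · exact hu2.2
    have hins : ({u ++ [false], u ++ [true]} : Finset Word) ⊆
        Finset.filter (fun x => x.take n = u) (FactF w (n + 1)) := by
      intro x hx
      rcases Finset.mem_insert.1 hx with rfl | hx
      · exact hmemf false
      · rw [Finset.mem_singleton] at hx
        subst hx
        exact hmemf true
    calc 2 = ({u ++ [false], u ++ [true]} : Finset Word).card := by
              rw [Finset.card_insert_of_notMem (by simp), Finset.card_singleton]
         _ ≤ _ := Finset.card_le_card hins
  calc (FactF w n).card + S.card
      = ∑ u ∈ FactF w n \ S, 1 + ∑ u ∈ S, 2 := by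
        rw [Finset.sum_const, Finset.sum_const, Finset.card_sdiff_of_subset hSsub]
        have : S.card ≤ (FactF w n).card := Finset.card_le_card hSsub
        simp only [smul_eq_mul, mul_one]
        omega
    _ ≤ ∑ u ∈ FactF w n \ S, (Finset.filter (fun x => x.take n = u) (FactF w (n + 1))).card
        + ∑ u ∈ S, (Finset.filter (fun x => x.take n = u) (FactF w (n + 1))).card := by
        gcongr with u hu u hu
        · exact fib1 u (Finset.mem_sdiff.1 hu).1
        · exact fib2 u hu
    _ = ∑ u ∈ FactF w n, (Finset.filter (fun x => x.take n = u) (FactF w (n + 1))).card := by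
        rw [Finset.sum_sdiff hSsub]

lemma infix_dropLast_of_occ {v w : Word} {i : ℕ} (h : i ∈ occF v w)
    (hlt : i + v.length < w.length) : v <:+: w.dropLast := by
  obtain ⟨s, t, hs, hw⟩ := mem_occF_iff_decomp.1 h
  have htne : t ≠ [] := by
    intro hnil
    subst hnil
    have : w.length = i + v.length := by rw [← hw]; simp [hs]
    omega
  refine ⟨s, t.dropLast, ?_⟩
  rw [← hw, List.dropLast_append_of_ne_nil htne]

lemma eq_drop_of_occ_end {v w : Word} {i : ℕ} (h : i ∈ occF v w)
    (hend : i + v.length = w.length) : v = w.drop i := by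
  obtain ⟨h1, h2⟩ := mem_occF.1 h
  rw [← h2, List.take_of_length_le]
  rw [List.length_drop]
  omega

/-- if an extension of `x :: t` occurs only at the very end, while `y :: t` is
right special with `x ≠ y`, then the suffix of length `|t|+1` occurs twice -/
lemma suffix_repeated_of_dies {w t : Word} {x y c' : Bool}
    (hxy : x ≠ y) (hy : RightSpecial w (y :: t))
    (hin : (x :: t) ++ [c'] <:+: w) (hout : ¬ ((x :: t) ++ [c'] <:+: w.dropLast)) :
    2 ≤ (occF (w.drop (w.length - (t.length + 1))) w).card := by
  have hvlen : ((x :: t) ++ [c']).length = t.length + 2 := by simp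
  -- the occurrence of (x::t)++[c'] is at the end
  obtain ⟨i, hi⟩ := infix_iff_occF.1 hin
  have hibd : i + (t.length + 2) ≤ w.length := by
    have := (mem_occF.1 hi).1
    rwa [hvlen] at this
  have hiend : i + (t.length + 2) = w.length := by
    rcases Nat.lt_or_ge (i + (t.length + 2)) w.length with hlt | hge
    · exact absurd (infix_dropLast_of_occ hi (by rwa [hvlen])) hout
    · omega
  have hsufeq : (x :: t) ++ [c'] = w.drop i := eq_drop_of_occ_end hi (by rwa [hvlen])
  have hieq : i = w.length - (t.length + 2) := by omega
  -- the suffix of length |t|+1 is t ++ [c']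
  have hsuf1 : w.drop (w.length - (t.length + 1)) = t ++ [c'] := by
    have := congrArg List.tail hsufeq
    rw [List.tail_drop] at this
    simp only [List.cons_append, List.tail_cons] at this
    rw [this]
    congr 1
    omega
  -- occurrence of (y::t)++[c'] somewhere
  have hyin : (y :: t) ++ [c'] <:+: w := by
    cases c'
    · exact hy.1
    · exact hy.2
  obtain ⟨j, hj⟩ := infix_iff_occF.1 hyin
  have hjne : j ≠ i := by
    rintro rfl
    have hjbd : j + ((y :: t) ++ [c']).length = w.length := by simp; omega
    have h1 : (y :: t) ++ [c'] = w.drop j := eq_drop_of_occ_end hj hjbd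
    rw [← hsufeq] at h1
    have : y = x := by
      have := congrArg (fun l => l.head?) h1
      simpa using this
    exact hxy this.symm
  -- shift to occurrence of t ++ [c']
  have hj' : (j + 1) ∈ occF (t ++ [c']) w := by
    have : (y :: t) ++ [c'] = y :: (t ++ [c']) := by simp
    exact occF_shift (this ▸ hj)
  -- the end occurrence of t ++ [c']
  have hendocc : (w.length - (t.length + 1)) ∈ occF (t ++ [c']) w := by
    rw [mem_occF]
    have hllen : (t ++ [c']).length = t.length + 1 := by simp
    refine ⟨by rw [hllen]; omega, ?_⟩
    rw [hllen, ← hsuf1, List.take_of_length_le]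
    rw [List.length_drop]
    omega
  have hne2 : j + 1 ≠ w.length - (t.length + 1) := by
    intro heq
    apply hjne
    omega
  rw [hsuf1]
  exact Finset.one_lt_card.2 ⟨j + 1, hj', _, hendocc, hne2⟩

/-- if the suffix of length m occurs at least twice, every factor of length m
extends to the right -/
lemma extendable_of_suffix_repeated {w : Word} {m : ℕ}
    (h2 : 2 ≤ (occF (w.drop (w.length - m)) w).card) :
    ∀ u ∈ FactF w m, ∃ c, u ++ [c] ∈ FactF w (m + 1) := by
  intro u hu
  obtain ⟨hul, huinf⟩ := mem_FactF.1 hu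
  -- find an occurrence of u that is not at the very end
  have hocc : ∃ i ∈ occF u w, i + m < w.length := by
    obtain ⟨i, hi⟩ := infix_iff_occF.1 huinf
    have hib := (mem_occF.1 hi).1
    rw [hul] at hib
    rcases Nat.lt_or_ge (i + m) w.length with hlt | hge
    · exact ⟨i, hi, hlt⟩
    · -- u is the suffix of length m; use the second occurrence
      have hieq : i + m = w.length := by omega
      have hueq : u = w.drop (w.length - m) := by
        have := eq_drop_of_occ_end hi (by omega)
        rw [this]
        congr 1
        omega
      obtain ⟨a, ha, b, hb, hab⟩ := Finset.one_lt_card.1 h2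
      rw [← hueq] at ha hb
      rcases Nat.lt_or_ge (a + m) w.length with h | h
      · exact ⟨a, ha, h⟩
      · rcases Nat.lt_or_ge (b + m) w.length with h' | h'
        · exact ⟨b, hb, h'⟩
        · exfalso
          have ha1 := (mem_occF.1 ha).1
          have hb1 := (mem_occF.1 hb).1
          rw [hul] at ha1 hb1
          omega
  obtain ⟨i, hi, hilt⟩ := hocc
  refine ⟨w[i + m], ?_⟩
  rw [mem_FactF]
  refine ⟨by simp [hul], ?_⟩
  rw [infix_iff_occF]
  refine ⟨i, mem_occF.2 ⟨by simp [hul]; omega, ?_⟩⟩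
  have hw1 : (w.drop i).take (m + 1) = (w.drop i).take m ++ [w[i + m]] :=
    take_getElem_eq hilt
  have hw2 : (w.drop i).take m = u := by
    have := (mem_occF.1 hi).2
    rwa [hul] at this
  simp only [List.length_append, hul, List.length_cons, List.length_nil]
  rw [hw1, hw2]

/-- Trapezoidal words have at most one right special factor of each length. -/
lemma rs_unique_aux : ∀ N : ℕ, ∀ w : Word, ∀ n : ℕ, w.length + n ≤ N → Trapezoidal w →
    ∀ u₁ u₂ : Word, u₁.length = n → u₂.length = n →
    RightSpecial w u₁ → RightSpecial w u₂ → u₁ = u₂ := by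
  intro N
  induction N with
  | zero =>
    intro w n hN htrap u₁ u₂ hl1 hl2 hr1 hr2
    have : n = 0 := by omega
    subst this
    rw [List.length_eq_zero_iff] at hl1 hl2
    rw [hl1, hl2]
  | succ N ih =>
    intro w n hN htrap u₁ u₂ hl1 hl2 hr1 hr2
    by_contra hne
    -- n ≥ 1
    rcases n with - | m
    · rw [List.length_eq_zero_iff] at hl1 hl2
      exact hne (hl1.trans hl2.symm)
    -- tails are right special of length m, hence equal
    have hwne : w ≠ [] := by
      intro hw
      have := hr1.1.length_le
      rw [hw] at this
      simp at this
    have htail : u₁.drop 1 = u₂.drop 1 := by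
      refine ih w m (by omega) htrap _ _ (by simp [List.length_drop, hl1]) 
        (by simp [List.length_drop, hl2]) 
        (hr1.suffix (List.drop_suffix 1 u₁)) (hr2.suffix (List.drop_suffix 1 u₂))
    obtain ⟨x₁, t₁, rfl⟩ := List.exists_cons_of_ne_nil
      (by intro h; rw [h] at hl1; simp at hl1 : u₁ ≠ [])
    obtain ⟨x₂, t₂, rfl⟩ := List.exists_cons_of_ne_nil
      (by intro h; rw [h] at hl2; simp at hl2 : u₂ ≠ [])
    simp only [List.drop_one, List.tail_cons] at htail
    subst htail
    have hx : x₁ ≠ x₂ := by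
      intro h
      exact hne (by rw [h])
    set t := t₁ with ht
    have htl : t.length = m := by simpa using hl1
    -- dropLast w is trapezoidal
    have htrapd : Trapezoidal w.dropLast := by
      intro k
      refine le_trans (Set.ncard_le_ncard ?_ ?_) (htrap k)
      · intro u hu
        exact ⟨hu.1, hu.2.trans (List.dropLast_prefix w).isInfix⟩
      · rw [factorSet_eq_FactF]
        exact (FactF w k).finite_toSet
    have hwlen : 1 ≤ w.length := by
      cases w
      · exact absurd rfl hwne
      · simp
    -- not both can be right special in dropLast w
    have hnotboth : ¬ (RightSpecial w.dropLast (x₁ :: t) ∧ RightSpecial w.dropLast (x₂ :: t)) := by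
      rintro ⟨ha, hb⟩
      refine hne (ih w.dropLast (m + 1) ?_ htrapd _ _ hl1 hl2 ha hb)
      rw [List.length_dropLast]
      omega
    -- hence the suffix of length m+1 occurs at least twice
    have hsufrep : 2 ≤ (occF (w.drop (w.length - (m + 1))) w).card := by
      rw [not_and_or] at hnotboth
      have key : ∀ (x y : Bool), x ≠ y → RightSpecial w (x :: t) → RightSpecial w (y :: t) →
          ¬ RightSpecial w.dropLast (x :: t) →
          2 ≤ (occF (w.drop (w.length - (m + 1))) w).card := by
        intro x y hxy hrx hry hnrs
        rw [RightSpecial, not_and_or] at hnrs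
        rcases hnrs with h | h
        · have := suffix_repeated_of_dies hxy hry hrx.1 h
          rwa [htl] at this
        · have := suffix_repeated_of_dies hxy hry hrx.2 h
          rwa [htl] at this
      rcases hnotboth with h | h
      · exact key x₁ x₂ hx hr1 hr2 h
      · exact key x₂ x₁ (Ne.symm hx) hr2 hr1 h
    -- suffixes of all lengths k ≤ m+1 occur at least twice
    have hwlen2 : m + 2 ≤ w.length := by
      have := hr1.1.length_le
      simp [hl1] at this
      omega
    have hsufk : ∀ k ≤ m + 1, 2 ≤ (occF (w.drop (w.length - k)) w).card := by
      intro k hk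
      exact le_trans hsufrep (occF_suffix_card_mono hk (by omega))
    -- counting chain: (FactF w k).card ≥ k + 1 for k ≤ m + 1
    have hchain : ∀ k, k ≤ m + 1 → k + 1 ≤ (FactF w k).card := by
      intro k
      induction k with
      | zero => intro _; rw [FactF_zero]; simp
      | succ k ihk =>
        intro hk
        have hk' : k ≤ m + 1 := by omega
        have hS : ∀ u ∈ ({(x₁ :: t).drop (m + 1 - k)} : Finset Word),
            u ∈ FactF w k ∧ RightSpecial w u := by
          intro u hu
          rw [Finset.mem_singleton] at hu
          subst hu
          constructor
          · rw [mem_FactF]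
            constructor
            · rw [List.length_drop, hl1]; omega
            · exact drop_infix_of_infix _ hr1.infix
          · exact hr1.suffix (List.drop_suffix _ _)
        have := ext_count (extendable_of_suffix_repeated (hsufk k hk')) _ hS
        rw [Finset.card_singleton] at this
        have := ihk (by omega)
        omega
    -- final step: two right special factors of length m+1
    have hS2 : ∀ u ∈ ({x₁ :: t, x₂ :: t} : Finset Word),
        u ∈ FactF w (m + 1) ∧ RightSpecial w u := by
      intro u hu
      rcases Finset.mem_insert.1 hu with rfl | hu
      · exact ⟨mem_FactF.2 ⟨hl1, hr1.infix⟩, hr1⟩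
      · rw [Finset.mem_singleton] at hu
        subst hu
        exact ⟨mem_FactF.2 ⟨hl2, hr2.infix⟩, hr2⟩
    have hfinal : (FactF w (m + 1)).card + ({x₁ :: t, x₂ :: t} : Finset Word).card
        ≤ (FactF w (m + 2)).card :=
      ext_count (extendable_of_suffix_repeated (hsufk (m + 1) le_rfl)) _ hS2
    have hcard2 : ({x₁ :: t, x₂ :: t} : Finset Word).card = 2 := by
      rw [Finset.card_insert_of_notMem (by simp [hx]), Finset.card_singleton]
    have hup := htrap (m + 2)
    rw [ncard_factorSet] at hup
    have hlow := hchain (m + 1) le_rfl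
    omega

lemma rs_unique_s11 {w : Word} (htrap : Trapezoidal w) {u₁ u₂ : Word}
    (hl : u₁.length = u₂.length)
    (hr1 : RightSpecial w u₁) (hr2 : RightSpecial w u₂) : u₁ = u₂ :=
  rs_unique_aux (w.length + u₁.length) w u₁.length le_rfl htrap u₁ u₂ rfl hl.symm hr1 hr2

-- ===== H and prefix occurrence basics =====

lemma occ_self (w : Word) : occ w w = 1 := by
  rw [occ_eq_card]
  have : occF w w = {0} := by
    ext i
    rw [mem_occF, Finset.mem_singleton]
    constructor
    · rintro ⟨h1, -⟩
      omega
    · rintro rfl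
      exact ⟨by omega, by rw [List.drop_zero, List.take_of_length_le le_rfl]⟩
  rw [this, Finset.card_singleton]

lemma length_mem_Hset (w : Word) :
    w.length ∈ {n | n ≤ w.length ∧ occ (w.take n) w = 1} :=
  ⟨le_rfl, by rw [List.take_of_length_le le_rfl, occ_self]⟩

lemma Hp_le_length (w : Word) : Hp w ≤ w.length :=
  Nat.sInf_le (length_mem_Hset w)

lemma Hp_spec (w : Word) : Hp w ≤ w.length ∧ occ (w.take (Hp w)) w = 1 :=
  Nat.sInf_mem ⟨w.length, length_mem_Hset w⟩

lemma zero_mem_occF_take {w : Word} {n : ℕ} (hn : n ≤ w.length) :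
    0 ∈ occF (w.take n) w := by
  rw [mem_occF, w.length_take_of_le hn]
  exact ⟨by omega, by rw [List.drop_zero, ← w.length_take_of_le hn]⟩

lemma occ_nil (w : Word) : occ [] w = w.length + 1 := by
  rw [occ_eq_card]
  have : occF [] w = Finset.range (w.length + 1) := by
    ext i
    rw [mem_occF, Finset.mem_range]
    simp
  rw [this, Finset.card_range]

lemma Hp_pos {w : Word} (hne : w ≠ []) : 1 ≤ Hp w := by
  rcases Nat.eq_zero_or_pos (Hp w) with h | h
  · exfalso
    obtain ⟨-, h2⟩ := Hp_spec w
    rw [h, List.take_zero, occ_nil] at h2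
    have : w.length ≠ 0 := fun hc => hne (List.length_eq_zero_iff.1 hc)
    omega
  · exact h

lemma occ_take_ge_two {w : Word} {n : ℕ} (hn : n < Hp w) : 2 ≤ (occF (w.take n) w).card := by
  have hnle : n ≤ w.length := le_trans (le_of_lt hn) (Hp_le_length w)
  have hnot := Nat.notMem_of_lt_sInf (s := {n | n ≤ w.length ∧ occ (w.take n) w = 1}) hn
  have h1 : 1 ≤ (occF (w.take n) w).card :=
    Finset.card_pos.2 ⟨0, zero_mem_occF_take hnle⟩
  rcases Nat.lt_or_ge (occF (w.take n) w).card 2 with h | h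
  · exfalso
    apply hnot
    refine ⟨hnle, ?_⟩
    rw [occ_eq_card]
    omega
  · exact h

lemma take_Hp_eq {w : Word} (hne : w ≠ []) :
    ∃ c : Bool, w.take (Hp w) = w.take (Hp w - 1) ++ [c] := by
  have h1 := Hp_pos hne
  have h2 := Hp_le_length w
  have := take_getElem_eq (w := w) (i := 0) (m := Hp w - 1) (by omega)
  rw [List.drop_zero] at this
  have e : Hp w - 1 + 1 = Hp w := by omega
  rw [e] at this
  exact ⟨_, this⟩

/-- occurrence of a word is an occurrence of any prefix -/
lemma occF_append_subset (v z w : Word) : occF (v ++ z) w ⊆ occF v w := by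
  intro j hj
  obtain ⟨s, t, hs, hw⟩ := mem_occF_iff_decomp.1 hj
  exact mem_occF_iff_decomp.2 ⟨s, z ++ t, hs, by rw [← hw]; simp⟩

lemma occF_ext_exists {v w : Word} {j : ℕ} (hj : j ∈ occF v w)
    (hlt : j + v.length < w.length) : ∃ c, j ∈ occF (v ++ [c]) w := by
  refine ⟨w[j + v.length]'hlt, ?_⟩
  rw [mem_occF] at hj ⊢
  obtain ⟨h1, h2⟩ := hj
  refine ⟨by simp; omega, ?_⟩
  have := take_getElem_eq (w := w) (i := j) (m := v.length) hlt
  simp only [List.length_append, List.length_cons, List.length_nil]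
  rw [this, h2]

lemma occF_ext_unique {v w : Word} {j : ℕ} {c c' : Bool} (h : j ∈ occF (v ++ [c]) w)
    (h' : j ∈ occF (v ++ [c']) w) : c = c' := by
  have h2 := (mem_occF.1 h).2
  have h2' := (mem_occF.1 h').2
  have hl : (v ++ [c]).length = (v ++ [c']).length := by simp
  rw [hl] at h2
  rw [h2] at h2'
  simpa using h2'

lemma rs_both {w p : Word} {c c' : Bool} (hcc : c ≠ c')
    (h1 : p ++ [c] <:+: w) (h2 : p ++ [c'] <:+: w) : RightSpecial w p := by
  constructor
  · cases c
    · exact h1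
    · cases c'
      · exact h2
      · exact absurd rfl hcc
  · cases c
    · cases c'
      · exact absurd rfl hcc
      · exact h2
    · exact h1

/-- Lemma B : in an open word, the longest repeated prefix is right special -/
lemma rs_of_open {w : Word} (hne : w ≠ []) (hopen : ¬ ClosedWord w) :
    RightSpecial w (w.take (Hp w - 1)) := by
  have hH1 := Hp_pos hne
  have hHle := Hp_le_length w
  obtain ⟨-, hocc1⟩ := Hp_spec w
  rw [occ_eq_card] at hocc1
  obtain ⟨c, hc⟩ := take_Hp_eq hne
  set p := w.take (Hp w - 1) with hp
  have hplen : p.length = Hp w - 1 := w.length_take_of_le (by omega)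
  have hocc2 : 2 ≤ (occF p w).card := occ_take_ge_two (by omega)
  have h0mem : 0 ∈ occF p w := zero_mem_occF_take (by omega)
  have h0memH : 0 ∈ occF (p ++ [c]) w := by
    rw [← hc]
    exact zero_mem_occF_take hHle
  by_cases hcase : ∃ j ∈ occF p w, j + p.length < w.length ∧ j ∉ occF (p ++ [c]) w
  · -- some occurrence is followed by the other letter: right special
    obtain ⟨j, hj, hjlt, hjnot⟩ := hcase
    obtain ⟨c', hc'⟩ := occF_ext_exists hj hjlt
    have hccne : c' ≠ c := by
      intro h
      rw [h] at hc'
      exact hjnot hc'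
    exact rs_both hccne
      (infix_iff_occF.2 ⟨j, hc'⟩) (infix_iff_occF.2 ⟨0, h0memH⟩)
  · -- otherwise w is closed: contradiction
    exfalso
    apply hopen
    push_neg at hcase
    -- every occurrence of p is at 0 or at the end
    have hdich : ∀ j ∈ occF p w, j = 0 ∨ j + p.length = w.length := by
      intro j hj
      rcases Nat.lt_or_ge (j + p.length) w.length with hlt | hge
      · left
        have hjH : j ∈ occF (p ++ [c]) w := hcase j hj hlt
        rw [← hc] at hjH
        have h0' : 0 ∈ occF (w.take (Hp w)) w := zero_mem_occF_take hHle
        exact Finset.card_le_one.1 (le_of_eq hocc1) j hjH 0 h0'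
      · right
        have := (mem_occF.1 hj).1
        omega
    -- so occF p w = {0, w.length - p.length}
    have hend : w.length - p.length ∈ occF p w := by
      obtain ⟨a, ha, hane⟩ := Finset.exists_mem_ne (s := occF p w) (by omega) 0
      rcases hdich a ha with rfl | h
      · exact absurd rfl hane
      · have : a = w.length - p.length := by omega
        rw [← this]
        exact ha
    have hne0 : w.length - p.length ≠ 0 := by
      have := (mem_occF.1 hend).1
      have : p.length < w.length := by omega
      omega
    have hsub : occF p w ⊆ {0, w.length - p.length} := by
      intro j hj
      rcases hdich j hj with rfl | h
      · simp
      · have hb := (mem_occF.1 hj).1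
        have : j = w.length - p.length := by omega
        simp [this]
    have hcardle : (occF p w).card ≤ 2 := by
      refine le_trans (Finset.card_le_card hsub) ?_
      refine le_trans (Finset.card_insert_le _ _) ?_
      simp
    refine Or.inr ⟨p, ?_, ?_, ?_, ?_⟩
    · -- p ≠ w
      intro h
      have : p.length = w.length := by rw [h]
      have hlt : p.length < w.length := by
        have := (mem_occF.1 hend).1
        omega
      omega
    · exact List.take_prefix _ w
    · rw [List.suffix_iff_eq_drop]
      have := eq_drop_of_occ_end hend (by omega)
      rwa [hplen] at this ⊢
    · rw [occ_eq_card]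
      omega

/-- Lemma A : if the longest repeated prefix is right special, the word is open -/
lemma open_of_rs {w : Word} (hne : w ≠ [])
    (hrs : RightSpecial w (w.take (Hp w - 1))) : ¬ ClosedWord w := by
  intro hcl
  rcases hcl with rfl | ⟨u, hunw, hupre, husuf, huocc⟩
  · exact hne rfl
  rw [occ_eq_card] at huocc
  have hulen : u.length ≤ w.length := hupre.length_le
  have hult : u.length < w.length := by
    rcases Nat.lt_or_ge u.length w.length with h | h
    · exact h
    · exact absurd (hupre.eq_of_length (by omega)) hunw
  have hutake : u = w.take u.length := List.prefix_iff_eq_take.1 hupre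
  have hudrop : u = w.drop (w.length - u.length) := List.suffix_iff_eq_drop.1 husuf
  have h0mem : 0 ∈ occF u w := by
    rw [mem_occF]
    exact ⟨by omega, by rw [List.drop_zero, ← hutake]⟩
  have hendmem : w.length - u.length ∈ occF u w := by
    rw [mem_occF]
    refine ⟨by omega, ?_⟩
    rw [← hudrop, List.take_of_length_le le_rfl]
  have hendne : w.length - u.length ≠ 0 := by omega
  have hpair : occF u w = {0, w.length - u.length} := by
    symm
    refine Finset.eq_of_subset_of_card_le ?_ ?_
    · intro j hj
      rcases Finset.mem_insert.1 hj with rfl | hj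
      · exact h0mem
      · rw [Finset.mem_singleton] at hj
        subst hj
        exact hendmem
    · rw [huocc, Finset.card_insert_of_notMem (by simp [Ne.symm hendne]),
        Finset.card_singleton]
  -- occurrences of any extension of u are at 0
  have hextocc : ∀ c : Bool, ∀ j, j ∈ occF (u ++ [c]) w → j = 0 := by
    intro c j hj
    have hj' : j ∈ occF u w := occF_append_subset u [c] w hj
    have hjb := (mem_occF.1 hj).1
    simp only [List.length_append, List.length_cons, List.length_nil] at hjb
    rw [hpair] at hj'
    rcases Finset.mem_insert.1 hj' with rfl | hj'
    · rfl
    · rw [Finset.mem_singleton] at hj'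
      omega
  -- Hp w = u.length + 1
  have hHle : Hp w ≤ u.length + 1 := by
    have hc : ∃ c, u ++ [c] <:+: w := by
      have : 0 + u.length < w.length := by omega
      obtain ⟨c, hc⟩ := occF_ext_exists h0mem this
      exact ⟨c, infix_iff_occF.2 ⟨0, hc⟩⟩
    obtain ⟨c, hcinf⟩ := hc
    refine Nat.sInf_le ⟨by omega, ?_⟩
    rw [occ_eq_card]
    have htk : w.take (u.length + 1) = u ++ [c] := by
      obtain ⟨j, hj⟩ := infix_iff_occF.1 hcinf
      have := hextocc c j hj
      subst this
      have h2 := (mem_occF.1 hj).2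
      simp only [List.length_append, List.length_cons, List.length_nil, List.drop_zero] at h2
      rw [← h2]
    rw [htk]
    have : occF (u ++ [c]) w = {0} := by
      ext j
      rw [Finset.mem_singleton]
      constructor
      · exact hextocc c j
      · rintro rfl
        obtain ⟨j', hj'⟩ := infix_iff_occF.1 hcinf
        have := hextocc c j' hj'
        subst this
        exact hj'
    rw [this, Finset.card_singleton]
  have hHge : u.length < Hp w := by
    by_contra h
    push_neg at h
    have hsub := occF_take_subset h (by omega : u.length ≤ w.length)
    rw [← hutake] at hsub
    obtain ⟨-, hocc1⟩ := Hp_spec w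
    rw [occ_eq_card] at hocc1
    have hle := Finset.card_le_card hsub
    rw [hocc1, huocc] at hle
    omega
  have hHequ : Hp w - 1 = u.length := by omega
  rw [hHequ, ← hutake] at hrs
  obtain ⟨hf, ht⟩ := hrs
  obtain ⟨jf, hjf⟩ := infix_iff_occF.1 hf
  obtain ⟨jt, hjt⟩ := infix_iff_occF.1 ht
  have hjf0 := hextocc false jf hjf
  subst hjf0
  have hjt0 := hextocc true jt hjt
  subst hjt0
  exact absurd (occF_ext_unique hjf hjt) (by simp)

/-- Lemma C : in an open trapezoidal word there is no right special factor of length `Hp w` -/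
lemma no_rs_Hp {w : Word} (hne : w ≠ []) (htrap : Trapezoidal w) (hopen : ¬ ClosedWord w)
    {v : Word} (hvlen : v.length = Hp w) : ¬ RightSpecial w v := by
  intro hv
  have hp := rs_of_open hne hopen
  have hH1 := Hp_pos hne
  have hHle := Hp_le_length w
  have hvne : v ≠ [] := by
    intro h
    rw [h] at hvlen
    simp at hvlen
    omega
  obtain ⟨x, t, rfl⟩ := List.exists_cons_of_ne_nil hvne
  have htlen : t.length = Hp w - 1 := by
    simp at hvlen
    omega
  have hteq : t = w.take (Hp w - 1) := by
    refine rs_unique_s11 htrap ?_ (hv.suffix ?_) hp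
    · rw [htlen, w.length_take_of_le (by omega)]
    · exact ⟨[x], rfl⟩
  obtain ⟨c, hc⟩ := take_Hp_eq hne
  have hinf : (x :: t) ++ [c] <:+: w := by
    cases c
    · exact hv.1
    · exact hv.2
  obtain ⟨j, hj⟩ := infix_iff_occF.1 hinf
  rw [List.cons_append] at hj
  have hshift : j + 1 ∈ occF (t ++ [c]) w := occF_shift hj
  have hteq2 : t ++ [c] = w.take (Hp w) := by rw [hc, hteq]
  rw [hteq2] at hshift
  obtain ⟨-, hocc1⟩ := Hp_spec w
  rw [occ_eq_card] at hocc1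
  have h0 : 0 ∈ occF (w.take (Hp w)) w := zero_mem_occF_take hHle
  have := Finset.card_le_one.1 (le_of_eq hocc1) _ hshift 0 h0
  omega

lemma Rp_le_length_succ (w : Word) :
    {n | ∀ u : Word, u.length = n → ¬ RightSpecial w u}.Nonempty := by
  refine ⟨w.length + 1, fun u hu hrs => ?_⟩
  have := hrs.1.length_le
  simp [hu] at this

lemma Hp_eq_Rp {w : Word} (hne : w ≠ []) (htrap : Trapezoidal w) (hopen : ¬ ClosedWord w) :
    Hp w = Rp w := by
  have hp := rs_of_open hne hopen
  have hH1 := Hp_pos hne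
  have hHle := Hp_le_length w
  refine le_antisymm ?_ ?_
  · refine le_csInf (Rp_le_length_succ w) ?_
    intro k hk
    by_contra hlt
    push_neg at hlt
    refine hk ((w.take (Hp w - 1)).drop ((Hp w - 1) - k)) ?_ (hp.suffix (List.drop_suffix _ _))
    rw [List.length_drop, w.length_take_of_le (by omega)]
    omega
  · exact Nat.sInf_le (fun u hu => no_rs_Hp hne htrap hopen hu)

-- ===== reversal transport =====

lemma closedWord_reverse {w : Word} (h : ClosedWord w) : ClosedWord w.reverse := by
  rcases h with rfl | ⟨u, hunw, hupre, husuf, huocc⟩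
  · exact Or.inl rfl
  refine Or.inr ⟨u.reverse, ?_, ?_, ?_, ?_⟩
  · intro hc
    exact hunw (by simpa using congrArg List.reverse hc)
  · exact List.reverse_prefix.2 husuf
  · exact List.reverse_suffix.2 hupre
  · rw [← occ_reverse]
    exact huocc

lemma closedWord_reverse_iff {w : Word} : ClosedWord w.reverse ↔ ClosedWord w := by
  constructor
  · intro h
    have := closedWord_reverse h
    rwa [List.reverse_reverse] at this
  · exact closedWord_reverse

lemma trapezoidal_reverse {w : Word} (h : Trapezoidal w) : Trapezoidal w.reverse := by
  intro n
  have himg : factorSet w.reverse n = List.reverse '' factorSet w n := by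
    ext u
    simp only [factorSet, Set.mem_setOf_eq, Set.mem_image]
    constructor
    · rintro ⟨h1, h2⟩
      refine ⟨u.reverse, ⟨by simpa using h1, ?_⟩, by simp⟩
      rw [← List.reverse_infix, List.reverse_reverse]
      exact h2
    · rintro ⟨x, ⟨h1, h2⟩, rfl⟩
      exact ⟨by simpa using h1, List.reverse_infix.2 h2⟩
  rw [himg, Set.ncard_image_of_injective _ List.reverse_injective]
  exact h n

lemma leftSpecial_iff_rs_reverse {w u : Word} :
    LeftSpecial w u ↔ RightSpecial w.reverse u.reverse := by
  unfold LeftSpecial RightSpecial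
  rw [← List.reverse_infix (l₁ := false :: u), ← List.reverse_infix (l₁ := true :: u)]
  simp [List.reverse_cons]

lemma Kp_eq_Hp_reverse (w : Word) : Kp w = Hp w.reverse := by
  unfold Kp Hp
  congr 1
  ext n
  simp only [Set.mem_setOf_eq, List.length_reverse]
  have e : (w.drop (w.length - n)).reverse = w.reverse.take n := by
    rw [drop_sub_eq_reverse_take, List.reverse_reverse]
  rw [occ_reverse (w.drop (w.length - n)) w, e]

lemma Lp_eq_Rp_reverse (w : Word) : Lp w = Rp w.reverse := by
  unfold Lp Rp
  congr 1
  ext n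
  simp only [Set.mem_setOf_eq]
  constructor
  · intro h v hv
    rw [← List.reverse_reverse v, ← leftSpecial_iff_rs_reverse]
    exact h v.reverse (by simpa using hv)
  · intro h u hu
    rw [leftSpecial_iff_rs_reverse]
    exact h u.reverse (by simpa using hu)

lemma stmt3_iff {w : Word} :
    (LeftSpecial w (w.drop (w.length - (Kp w - 1))) ∧ Kp w = Lp w) ↔
    (RightSpecial w.reverse (w.reverse.take (Hp w.reverse - 1)) ∧
      Hp w.reverse = Rp w.reverse) := by
  have e : (w.drop (w.length - (Kp w - 1))).reverse = w.reverse.take (Hp w.reverse - 1) := by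
    rw [drop_sub_eq_reverse_take, List.reverse_reverse, Kp_eq_Hp_reverse]
  constructor
  · rintro ⟨h1, h2⟩
    refine ⟨?_, ?_⟩
    · rw [← e]
      exact leftSpecial_iff_rs_reverse.1 h1
    · rw [← Kp_eq_Hp_reverse, ← Lp_eq_Rp_reverse]
      exact h2
  · rintro ⟨h1, h2⟩
    refine ⟨?_, ?_⟩
    · rw [leftSpecial_iff_rs_reverse, e]
      exact h1
    · rw [Kp_eq_Hp_reverse, Lp_eq_Rp_reverse]
      exact h2

/-- Characterization of open trapezoidal words (Proposition 19 of the paper). -/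
theorem open_trapezoidal_tfae (w : Word) (hne : w ≠ []) (htrap : Trapezoidal w) :
    [ ¬ ClosedWord w,
      RightSpecial w (w.take (Hp w - 1)) ∧ Hp w = Rp w,
      LeftSpecial w (w.drop (w.length - (Kp w - 1))) ∧ Kp w = Lp w
    ].TFAE := by
  have hrne : w.reverse ≠ [] := by
    intro h
    exact hne (by simpa using congrArg List.reverse h)
  have hrtrap : Trapezoidal w.reverse := trapezoidal_reverse htrap
  tfae_have 1 → 2 := fun h => ⟨rs_of_open hne h, Hp_eq_Rp hne htrap h⟩
  tfae_have 2 → 1 := fun h => open_of_rs hne h.1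
  tfae_have 1 → 3 := by
    intro h
    rw [stmt3_iff]
    have hropen : ¬ ClosedWord w.reverse := fun hc => h (closedWord_reverse_iff.1 hc)
    exact ⟨rs_of_open hrne hropen, Hp_eq_Rp hrne hrtrap hropen⟩
  tfae_have 3 → 1 := by
    intro h
    rw [stmt3_iff] at h
    have hropen := open_of_rs hrne h.1
    intro hc
    exact hropen (closedWord_reverse hc)
  tfae_finish
end
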